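/- The class of sets of PA degree is a null class: {Z ∈ 2^ℕ : Z computes a {0,1}-valued diagonally noncomputable function} has Lebesgue measure zero. -/

import Mathlib

/-!
Background definitions: oracle computability via codes, the jump, Turing and
truth-table reducibility, jump traceability, Cantor space measure notions,
effective (Σ/Π) classes, Martin-Löf randomness, and prefix-free complexity.
-/

namespace Superhigh

open Nat
open scoped Classical

/-- Codes for oracle Turing machines: the constructors of `Nat.Partrec.Code`
plus an `oracle` constructor. -/
inductive OCode : Type
  | zero : OCode
  | succ : OCode
  | left : OCode
  | right : OCode
  | oracle : OCode
  | pair : OCode → OCode → OCode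
  | comp : OCode → OCode → OCode
  | prec : OCode → OCode → OCode
  | rfind' : OCode → OCode

/-- Evaluation of an oracle code with oracle `O` (a partial function on ℕ). -/
def OCode.eval (O : ℕ →. ℕ) : OCode → ℕ →. ℕ
  | .zero => pure 0
  | .succ => fun n => Part.some (n + 1)
  | .left => fun n => Part.some (Nat.unpair n).1
  | .right => fun n => Part.some (Nat.unpair n).2
  | .oracle => O
  | .pair cf cg => fun n => Nat.pair <$> cf.eval O n <*> cg.eval O n
  | .comp cf cg => fun n => cg.eval O n >>= cf.eval O
  | .prec cf cg =>
    Nat.unpaired fun a n =>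
      n.rec (cf.eval O a) fun y IH => do
        let i ← IH
        cg.eval O (Nat.pair a (Nat.pair y i))
  | .rfind' cf =>
    Nat.unpaired fun a m =>
      (Nat.rfind fun n => (fun m => m = 0) <$> cf.eval O (Nat.pair a (n + m))).map (· + m)

/-- A standard numbering of the oracle codes. -/
def OCode.ofNat : ℕ → OCode
  | 0 => .zero
  | 1 => .succ
  | 2 => .left
  | 3 => .right
  | 4 => .oracle
  | n + 5 =>
    let m := n.div2.div2
    have hm : m < n + 5 := by
      simp only [m, Nat.div2_val]
      exact lt_of_le_of_lt (le_trans (Nat.div_le_self _ _) (Nat.div_le_self _ _)) (by omega)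
    have _m1 : m.unpair.1 < n + 5 := lt_of_le_of_lt m.unpair_left_le hm
    have _m2 : m.unpair.2 < n + 5 := lt_of_le_of_lt m.unpair_right_le hm
    match n.bodd, n.div2.bodd with
    | false, false => .pair (OCode.ofNat m.unpair.1) (OCode.ofNat m.unpair.2)
    | false, true => .comp (OCode.ofNat m.unpair.1) (OCode.ofNat m.unpair.2)
    | true, false => .prec (OCode.ofNat m.unpair.1) (OCode.ofNat m.unpair.2)
    | true, true => .rfind' (OCode.ofNat m)
decreasing_by
  all_goals first
    | exact _m1
    | exact _m2
    | exact hm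

/-- The characteristic (partial, but total-valued) function of a set of naturals,
used as a Turing oracle. -/
noncomputable def chi (A : Set ℕ) : ℕ →. ℕ :=
  fun n => Part.some (if n ∈ A then 1 else 0)

/-- `Φ^X_e`: the `e`-th function partial computable in the oracle set `X`. -/
noncomputable def phi (X : Set ℕ) (e : ℕ) : ℕ →. ℕ :=
  (OCode.ofNat e).eval (chi X)

/-- `J^X(e) = Φ^X_e(e)`, the diagonal jump function. -/
noncomputable def jumpFn (X : Set ℕ) : ℕ →. ℕ := fun e => phi X e e

/-- The Turing jump `X' = { e : J^X(e)↓ }`. -/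
noncomputable def jump (X : Set ℕ) : Set ℕ := { e | (jumpFn X e).Dom }

/-- `W^Y_m`: the domain of `Φ^Y_m`, i.e. the `m`-th set c.e. in `Y`. -/
noncomputable def W (Y : Set ℕ) (m : ℕ) : Set ℕ := { n | (phi Y m n).Dom }

/-- A partial function is partial computable in the oracle `O` iff some oracle
code computes it. -/
def RecursiveIn (O : ℕ →. ℕ) (f : ℕ →. ℕ) : Prop :=
  ∃ c : OCode, c.eval O = f

/-- Turing reducibility `A ≤_T B` for sets of naturals. -/
noncomputable def TuringLE (A B : Set ℕ) : Prop :=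
  RecursiveIn (chi B) (chi A)

/-- A (total) function between encodable types is computable in the oracle set `A`. -/
def ComputableIn {α β : Type*} [Encodable α] [Encodable β] (A : Set ℕ) (f : α → β) : Prop :=
  ∃ c : OCode, ∀ a : α,
    c.eval (chi A) (Encodable.encode a) = Part.some (Encodable.encode (f a))

/-- A set is computably enumerable in `B` if it is the domain of a function
partial computable in `B`. -/
noncomputable def CEIn (B A : Set ℕ) : Prop := ∃ m : ℕ, A = W B m

/-- A set is computably enumerable. -/
noncomputable def CE (A : Set ℕ) : Prop := CEIn ∅ A

/-- Truth-table reducibility `A ≤_tt B`: there is a Turing functional which is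
total for every oracle and computes `A` from `B`. -/
def ttLE (A B : Set ℕ) : Prop :=
  ∃ c : OCode, (∀ X : Set ℕ, ∀ n, ((c.eval (chi X)) n).Dom) ∧
    ∀ n, n ∈ A ↔ 1 ∈ c.eval (chi B) n

/-- Truth-table equivalence. -/
def ttEquiv (A B : Set ℕ) : Prop := ttLE A B ∧ ttLE B A

/-- `X` is jump traceable by `Y` with trace bound `g`: there is a computable `f`
such that `W^Y_{f(n)}` is finite with at most `g n` elements and contains
`J^X(n)` whenever the latter is defined. -/
noncomputable def JumpTraceableByWith (X Y : Set ℕ) (g : ℕ → ℕ) : Prop :=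
  ∃ f : ℕ → ℕ, Computable f ∧
    ∀ n : ℕ, (W Y (f n)).Finite ∧ (W Y (f n)).ncard ≤ g n ∧
      ∀ v : ℕ, v ∈ jumpFn X n → v ∈ W Y (f n)

/-- `X ≤_JT Y`: `X` is jump traceable by `Y`. -/
noncomputable def JumpTraceableBy (X Y : Set ℕ) : Prop :=
  ∃ g : ℕ → ℕ, Computable g ∧ JumpTraceableByWith X Y g

/-- A set is jump traceable if it is jump traceable by the empty oracle. -/
noncomputable def JumpTraceable (X : Set ℕ) : Prop := JumpTraceableBy X ∅

/-- `A` is JT-hard if `∅' ≤_JT A`. -/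
noncomputable def JTHard (A : Set ℕ) : Prop := JumpTraceableBy (jump ∅) A

/-- `A` is superhigh if `∅'' ≤_tt A'`. -/
noncomputable def SuperhighSet (A : Set ℕ) : Prop := ttLE (jump (jump ∅)) (jump A)

/-- `A` is high if `∅'' ≤_T A'`. -/
noncomputable def High (A : Set ℕ) : Prop := TuringLE (jump (jump ∅)) (jump A)

/-- `A` is Turing complete if `∅' ≤_T A`. -/
noncomputable def TuringComplete (A : Set ℕ) : Prop := TuringLE (jump ∅) A

/-- The subset of ℕ coded by a point of Cantor space. -/
def toSet (X : ℕ → Bool) : Set ℕ := { n | X n = true }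

/-- The basic clopen cylinder of Cantor space determined by a finite binary string. -/
def cylinder (σ : List Bool) : Set (ℕ → Bool) :=
  { X | List.ofFn (fun i : Fin σ.length => X i) = σ }

/-- The prefix of `X` of length `n`, as a finite binary string. -/
def prefixOf (X : ℕ → Bool) (n : ℕ) : List Bool := List.ofFn fun i : Fin n => X i

/-- `μ` is the fair-coin Lebesgue measure on Cantor space: every basic cylinder
determined by a string of length `k` has measure `2^{-k}`. -/
def IsFairCoin (μ : MeasureTheory.Measure (ℕ → Bool)) : Prop :=
  ∀ σ : List Bool, μ (cylinder σ) = (1 / 2 : ENNReal) ^ σ.length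

/-- `A` is almost everywhere dominating (w.r.t. the fair-coin measure `μ`):
for almost every `X`, every `X`-computable function is dominated by some
`A`-computable function. -/
noncomputable def AED (μ : MeasureTheory.Measure (ℕ → Bool)) (A : Set ℕ) : Prop :=
  ∀ᵐ X ∂μ, ∀ f : ℕ → ℕ, ComputableIn (toSet X) f →
    ∃ g : ℕ → ℕ, ComputableIn A g ∧ ∀ᶠ n in Filter.atTop, f n ≤ g n

/-- `f` is boundedly limit computable by `A`: `f` is the limit of an
`A`-computable approximation whose number of changes is computably bounded. -/
noncomputable def BLR (A : Set ℕ) (f : ℕ → ℕ) : Prop :=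
  ∃ F : ℕ → ℕ → ℕ, ComputableIn A (fun p : ℕ × ℕ => F p.1 p.2) ∧
    (∀ n, ∃ N, ∀ s ≥ N, F n s = f n) ∧
    ∃ g : ℕ → ℕ, Computable g ∧
      ∀ n, { s | F n s ≠ F n (s + 1) }.Finite ∧
        { s | F n s ≠ F n (s + 1) }.ncard < g n

/-- A Π⁰₁ class: the sets of branches avoided by no level of a computable
tree-style predicate on strings. -/
def PiOneClass (P : Set (ℕ → Bool)) : Prop :=
  ∃ f : List Bool → Bool, Computable f ∧
    P = { X | ∀ n : ℕ, f (prefixOf X n) = true }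

/-- A Π⁰₁(A) class (effectively closed relative to the oracle `A`). -/
def PiOneClassIn (A : Set ℕ) (P : Set (ℕ → Bool)) : Prop :=
  ∃ f : List Bool → Bool, ComputableIn A f ∧
    P = { X | ∀ n : ℕ, f (prefixOf X n) = true }

/-- A Π⁰₂ class. -/
def PiTwoClass (P : Set (ℕ → Bool)) : Prop :=
  ∃ f : ℕ → List Bool → Bool, Computable₂ f ∧
    P = { X | ∀ u : ℕ, ∃ n : ℕ, f u (prefixOf X n) = true }

/-- A Σ⁰₃ class (an effective union of Π⁰₂ classes). -/
def SigmaThreeClass (S : Set (ℕ → Bool)) : Prop :=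
  ∃ f : ℕ → ℕ → List Bool → Bool, (Computable fun p : ℕ × ℕ × List Bool => f p.1 p.2.1 p.2.2) ∧
    S = { X | ∃ e : ℕ, ∀ u : ℕ, ∃ n : ℕ, f e u (prefixOf X n) = true }

/-- `Z` is Martin-Löf random relative to the oracle `A` (w.r.t. the fair-coin
measure `μ`): `Z` passes every `A`-Martin-Löf test, where a test is a uniformly
`Σ⁰₁(A)` sequence of open sets `G_m` with `μ (G_m) ≤ 2^{-m}`. -/
noncomputable def MLRandomIn (μ : MeasureTheory.Measure (ℕ → Bool)) (A : Set ℕ)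
    (Z : ℕ → Bool) : Prop :=
  ∀ f : ℕ × List Bool → Bool, ComputableIn A f →
    (∀ m : ℕ, μ { X | ∃ n : ℕ, f (m, prefixOf X n) = true } ≤ (1 / 2 : ENNReal) ^ m) →
    ¬∀ m : ℕ, ∃ n : ℕ, f (m, prefixOf Z n) = true

/-- `Z` is Martin-Löf random (w.r.t. the fair-coin measure `μ`). -/
noncomputable def MLRandom (μ : MeasureTheory.Measure (ℕ → Bool)) (Z : ℕ → Bool) : Prop :=
  MLRandomIn μ ∅ Z

/-- `Z` is weakly 2-random: `Z` belongs to no null Π⁰₂ class. -/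
noncomputable def WeaklyTwoRandom (μ : MeasureTheory.Measure (ℕ → Bool)) (Z : ℕ → Bool) : Prop :=
  ∀ P : Set (ℕ → Bool), PiTwoClass P → μ P = 0 → Z ∉ P

/-- A prefix-free machine: a partial computable map from binary strings to
naturals whose domain is an antichain under the prefix relation. -/
structure PFMachine where
  M : List Bool →. ℕ
  partrec : Partrec M
  prefixFree : ∀ σ τ : List Bool, σ <+: τ → (M σ).Dom → (M τ).Dom → σ = τ

/-- The prefix-free complexity of `x` relative to the machine `M` (with value
`⊤` when `x` is not in the range of `M`). -/
noncomputable def Kof (M : PFMachine) (x : ℕ) : ℕ∞ :=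
  sInf { d : ℕ∞ | ∃ σ : List Bool, (σ.length : ℕ∞) = d ∧ x ∈ M.M σ }

/-- An optimal (universal) prefix-free machine. -/
def OptimalPF (U : PFMachine) : Prop :=
  ∀ M : PFMachine, ∃ c : ℕ, ∀ (x : ℕ) (σ : List Bool), x ∈ M.M σ →
    ∃ τ : List Bool, τ.length ≤ σ.length + c ∧ x ∈ U.M τ

/-- The prefix of the characteristic sequence of `B ⊆ ℕ` of length `n`, coded
as a natural number. -/
noncomputable def restrictCode (B : Set ℕ) (n : ℕ) : ℕ :=
  Encodable.encode (List.ofFn fun i : Fin n => decide ((i : ℕ) ∈ B))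

/-- `B` is `K`-trivial (relative to the optimal machine `U`):
`K(B↾n) ≤ K(n) + b` for some constant `b`. -/
noncomputable def KTrivialFor (U : PFMachine) (B : Set ℕ) : Prop :=
  ∃ b : ℕ, ∀ n : ℕ, Kof U (restrictCode B n) ≤ Kof U n + (b : ℕ∞)

/-- `B` is `K`-trivial: `K(B↾n) ≤ K(n) + O(1)` for every optimal prefix-free machine. -/
noncomputable def KTrivial (B : Set ℕ) : Prop :=
  ∀ U : PFMachine, OptimalPF U → KTrivialFor U B


/-- `f` is a {0,1}-valued function that is diagonally noncomputable relative to the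
oracle `A`: `f(e) ≠ J^A(e)` whenever `J^A(e)` is defined. -/
noncomputable def DNCBoolRel (A : Set ℕ) (f : ℕ → Bool) : Prop :=
  ∀ (e v : ℕ), v ∈ jumpFn A e → (cond (f e) 1 0 : ℕ) ≠ v

/-! ### Auxiliary development -/

section Aux

open Nat.Partrec (Code)
open Nat.Partrec.Code

/-- Encoding of `OCode` into ℕ, inverse to `OCode.ofNat`. -/
private def encO : OCode → ℕ
  | .zero => 0
  | .succ => 1
  | .left => 2
  | .right => 3
  | .oracle => 4
  | .pair cf cg => 2 * (2 * Nat.pair (encO cf) (encO cg)) + 5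
  | .comp cf cg => 2 * (2 * Nat.pair (encO cf) (encO cg) + 1) + 5
  | .prec cf cg => (2 * (2 * Nat.pair (encO cf) (encO cg)) + 1) + 5
  | .rfind' cf => (2 * (2 * encO cf + 1) + 1) + 5

private theorem ofNat_encO : ∀ c, OCode.ofNat (encO c) = c := fun c => by
  induction c <;> simp only [encO] <;> rw [OCode.ofNat] <;> simp [Nat.div2_val, *]

/-- Pointwise graph inclusion of partial oracles. -/
private def PLe (O O' : ℕ →. ℕ) : Prop := ∀ n v, v ∈ O n → v ∈ O' n

private theorem mem_pair_eval {a b : Part ℕ} {v : ℕ} :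
    v ∈ Nat.pair <$> a <*> b ↔ ∃ x ∈ a, ∃ y ∈ b, Nat.pair x y = v := by
  simp [Seq.seq, Part.mem_bind_iff, Part.mem_map_iff]

/-- Monotonicity of oracle computations in the oracle. -/
private theorem eval_mono {O O' : ℕ →. ℕ} (h : PLe O O') :
    ∀ (c : OCode) (n v : ℕ), v ∈ c.eval O n → v ∈ c.eval O' n := by
  intro c
  induction c with
  | zero => exact fun n v hv => hv
  | succ => exact fun n v hv => hv
  | left => exact fun n v hv => hv
  | right => exact fun n v hv => hv
  | oracle => exact h
  | pair cf cg ihf ihg =>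
    intro n v hv
    rw [OCode.eval, mem_pair_eval] at hv ⊢
    obtain ⟨x, hx, y, hy, rfl⟩ := hv
    exact ⟨x, ihf _ _ hx, y, ihg _ _ hy, rfl⟩
  | comp cf cg ihf ihg =>
    intro n v hv
    change v ∈ (cg.eval O n).bind (cf.eval O) at hv
    change v ∈ (cg.eval O' n).bind (cf.eval O')
    replace hv := Part.mem_bind_iff.1 hv
    refine Part.mem_bind_iff.2 ?_
    obtain ⟨x, hx, hv⟩ := hv
    exact ⟨x, ihg _ _ hx, ihf _ _ hv⟩
  | prec cf cg ihf ihg =>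
    intro n v
    rw [OCode.eval, OCode.eval]
    simp only [Nat.unpaired]
    induction n.unpair.2 generalizing v with
    | zero => exact ihf _ _
    | succ m ihm =>
      intro hv
      simp only [Part.bind_eq_bind, Part.mem_bind_iff] at hv ⊢
      obtain ⟨i, hi, hv⟩ := hv
      exact ⟨i, ihm _ hi, ihg _ _ hv⟩
  | rfind' cf ihf =>
    intro n v hv
    rw [OCode.eval] at hv ⊢
    simp only [Nat.unpaired, Part.mem_map_iff] at hv ⊢
    obtain ⟨w, hw, rfl⟩ := hv
    refine ⟨w, ?_, rfl⟩
    replace hw := Nat.mem_rfind.1 hw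
    refine Nat.mem_rfind.2 ?_
    constructor
    · obtain ⟨u, hu, hdu⟩ := (Part.mem_map_iff _).1 hw.1
      exact (Part.mem_map_iff _).2 ⟨u, ihf _ _ hu, hdu⟩
    · intro m hm
      obtain ⟨u, hu, hdu⟩ := (Part.mem_map_iff _).1 (hw.2 hm)
      exact (Part.mem_map_iff _).2 ⟨u, ihf _ _ hu, hdu⟩

/-- The finite-string oracle: answers queries below the length, diverges above. -/
private def oraF (σ : List Bool) : ℕ →. ℕ := fun n =>
  Part.ofOption (σ[n]?.map fun b => cond b 1 0)

private theorem mem_cylinder_iff {σ : List Bool} {Z : ℕ → Bool} :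
    Z ∈ cylinder σ ↔ prefixOf Z σ.length = σ := Iff.rfl

private theorem prefixOf_getElem? (Z : ℕ → Bool) (k n : ℕ) :
    (prefixOf Z k)[n]? = if n < k then some (Z n) else none := by
  by_cases h : n < k
  · simp [prefixOf, List.getElem?_ofFn, List.ofFnNthVal, h]
  · simp [prefixOf, List.getElem?_ofFn, List.ofFnNthVal, h]

private theorem oraF_le_chi (Z : ℕ → Bool) (k : ℕ) :
    PLe (oraF (prefixOf Z k)) (chi (toSet Z)) := by
  intro n v hv
  rw [oraF, Part.mem_ofOption, prefixOf_getElem?] at hv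
  by_cases h : n < k
  · rw [if_pos h] at hv
    have hveq : v = cond (Z n) 1 0 := by simpa using hv.symm
    rw [chi, Part.mem_some_iff, hveq]
    by_cases hb : n ∈ toSet Z
    · have hb' : Z n = true := hb
      simp [hb, hb']
    · have hb' : Z n = false := by simpa [toSet] using hb
      simp [hb, hb']
  · rw [if_neg h] at hv
    simp at hv

private theorem oraF_mono (Z : ℕ → Bool) {k k' : ℕ} (h : k ≤ k') :
    PLe (oraF (prefixOf Z k)) (oraF (prefixOf Z k')) := by
  intro n v hv
  rw [oraF, Part.mem_ofOption, prefixOf_getElem?] at hv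
  rw [oraF, Part.mem_ofOption, prefixOf_getElem?]
  by_cases hn : n < k
  · rw [if_pos hn] at hv
    rw [if_pos (lt_of_lt_of_le hn h)]
    exact hv
  · rw [if_neg hn] at hv
    simp at hv

/-- The use theorem: a converging oracle computation with oracle `Z` already
converges with a long enough finite prefix of `Z` as oracle. -/
private theorem eval_use (Z : ℕ → Bool) :
    ∀ (c : OCode) (n v : ℕ), v ∈ c.eval (chi (toSet Z)) n →
      ∃ k, v ∈ c.eval (oraF (prefixOf Z k)) n := by
  intro c
  induction c with
  | zero => exact fun n v hv => ⟨0, hv⟩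
  | succ => exact fun n v hv => ⟨0, hv⟩
  | left => exact fun n v hv => ⟨0, hv⟩
  | right => exact fun n v hv => ⟨0, hv⟩
  | oracle =>
    intro n v hv
    refine ⟨n + 1, ?_⟩
    replace hv : v ∈ chi (toSet Z) n := hv
    rw [chi, Part.mem_some_iff] at hv
    subst hv
    show _ ∈ oraF (prefixOf Z (n+1)) n
    rw [oraF, Part.mem_ofOption, prefixOf_getElem?, if_pos (Nat.lt_succ_self n)]
    refine Option.mem_def.2 ?_
    by_cases hb : n ∈ toSet Z
    · have hb' : Z n = true := hb
      simp [hb, hb']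
    · have hb' : Z n = false := by simpa [toSet] using hb
      simp [hb, hb']
  | pair cf cg ihf ihg =>
    intro n v hv
    rw [OCode.eval, mem_pair_eval] at hv
    obtain ⟨x, hx, y, hy, rfl⟩ := hv
    obtain ⟨k₁, h₁⟩ := ihf _ _ hx
    obtain ⟨k₂, h₂⟩ := ihg _ _ hy
    refine ⟨max k₁ k₂, ?_⟩
    rw [OCode.eval, mem_pair_eval]
    exact ⟨x, eval_mono (oraF_mono Z (le_max_left _ _)) _ _ _ h₁,
      y, eval_mono (oraF_mono Z (le_max_right _ _)) _ _ _ h₂, rfl⟩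
  | comp cf cg ihf ihg =>
    intro n v hv
    change v ∈ (cg.eval (chi (toSet Z)) n).bind (cf.eval (chi (toSet Z))) at hv
    replace hv := Part.mem_bind_iff.1 hv
    obtain ⟨x, hx, hv⟩ := hv
    obtain ⟨k₁, h₁⟩ := ihg _ _ hx
    obtain ⟨k₂, h₂⟩ := ihf _ _ hv
    refine ⟨max k₁ k₂, ?_⟩
    change v ∈ (cg.eval (oraF (prefixOf Z (max k₁ k₂))) n).bind
      (cf.eval (oraF (prefixOf Z (max k₁ k₂))))
    refine Part.mem_bind_iff.2 ?_
    exact ⟨x, eval_mono (oraF_mono Z (le_max_left _ _)) _ _ _ h₁,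
      eval_mono (oraF_mono Z (le_max_right _ _)) _ _ _ h₂⟩
  | prec cf cg ihf ihg =>
    intro n v
    simp only [OCode.eval, Nat.unpaired]
    induction n.unpair.2 generalizing v with
    | zero => exact ihf _ _
    | succ m ihm =>
      intro hv
      simp only [Part.bind_eq_bind, Part.mem_bind_iff] at hv
      obtain ⟨i, hi, hv⟩ := hv
      obtain ⟨k₁, h₁⟩ := ihm _ hi
      obtain ⟨k₂, h₂⟩ := ihg _ _ hv
      refine ⟨max k₁ k₂, ?_⟩
      simp only [Part.bind_eq_bind, Part.mem_bind_iff]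
      refine ⟨i, ?_, eval_mono (oraF_mono Z (le_max_right _ _)) _ _ _ h₂⟩
      -- lift the membership in the recursor through monotonicity, via the prec code
      have hmono := eval_mono (oraF_mono Z (le_max_left k₁ k₂)) (OCode.prec cf cg)
        (Nat.pair n.unpair.1 m) i
      simp only [OCode.eval, Nat.unpaired, Nat.unpair_pair] at hmono
      exact hmono h₁
  | rfind' cf ihf =>
    intro n v hv
    simp only [OCode.eval, Nat.unpaired, Part.mem_map_iff] at hv
    obtain ⟨w, hw, rfl⟩ := hv
    replace hw := Nat.mem_rfind.1 hw
    have key : ∀ t, t ≤ w → ∃ k u, u ∈ cf.eval (oraF (prefixOf Z k))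
        (Nat.pair n.unpair.1 (t + n.unpair.2)) ∧ decide (u = 0) = decide (t = w) := by
      intro t ht
      rcases eq_or_lt_of_le ht with rfl | hlt
      · obtain ⟨u, hu, hdu⟩ := (Part.mem_map_iff _).1 hw.1
        obtain ⟨k, hk⟩ := ihf _ _ hu
        exact ⟨k, u, hk, by simp [hdu]⟩
      · obtain ⟨u, hu, hdu⟩ := (Part.mem_map_iff _).1 (hw.2 hlt)
        obtain ⟨k, hk⟩ := ihf _ _ hu
        refine ⟨k, u, hk, by simp [hdu, Nat.ne_of_lt hlt]⟩
    choose! kf uf huf hduf using key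
    set K := (Finset.range (w + 1)).sup kf with hK
    have hKt : ∀ t, t ≤ w → kf t ≤ K :=
      fun t ht => Finset.le_sup (Finset.mem_range.2 (Nat.lt_succ_of_le ht))
    refine ⟨K, ?_⟩
    simp only [OCode.eval, Nat.unpaired, Part.mem_map_iff]
    refine ⟨w, ?_, rfl⟩
    refine Nat.mem_rfind.2 ?_
    constructor
    · refine (Part.mem_map_iff _).2 ⟨uf w, eval_mono (oraF_mono Z (hKt w le_rfl)) _ _ _
        (huf w le_rfl), ?_⟩
      have := hduf w le_rfl
      simpa using this
    · intro m hm
      refine (Part.mem_map_iff _).2 ⟨uf m, eval_mono (oraF_mono Z (hKt m hm.le)) _ _ _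
        (huf m hm.le), ?_⟩
      have := hduf m hm.le
      simpa [Nat.ne_of_lt hm] using this

end Aux

section Aux2

open Nat.Partrec (Code)
open Nat.Partrec.Code

/-- The lookup partial function underlying the finite-string oracle. -/
private def lookupPF : ℕ →. ℕ := fun y =>
  (Part.ofOption (Encodable.decode (α := List Bool) y.unpair.1)).bind fun σ => oraF σ y.unpair.2

private theorem lookupPF_partrec : Nat.Partrec lookupPF := by
  rw [← Partrec.nat_iff]
  refine Partrec.bind ?_ ?_
  · exact Computable.ofOption (Computable.decode.comp
      (Primrec.fst.comp Primrec.unpair).to_comp)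
  · have hg : Primrec fun p : ℕ × List Bool => p.2[p.1.unpair.2]?.map fun b => cond b 1 0 := by
      have h1 : Primrec fun p : ℕ × List Bool => p.2[p.1.unpair.2]? :=
        Primrec.list_getElem?.comp Primrec.snd
          ((Primrec.snd.comp Primrec.unpair).comp Primrec.fst)
      have h2 : Primrec₂ fun (_ : ℕ × List Bool) (b : Bool) => (cond b 1 0 : ℕ) :=
        (Primrec.cond Primrec.snd (Primrec.const 1) (Primrec.const 0)).to₂
      exact Primrec.option_map h1 h2
    exact (Computable.ofOption hg.to_comp).to₂

/-- A `Code` computing `lookupPF`. -/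
private noncomputable def oCode : Code := Classical.choose (exists_code.1 lookupPF_partrec)

private theorem oCode_eval : oCode.eval = lookupPF :=
  Classical.choose_spec (exists_code.1 lookupPF_partrec)

/-- Translation of an `OCode` with finite-string oracle `σ` to an ordinary `Code`. -/
private noncomputable def trOC (σ : List Bool) : OCode → Code
  | .zero => Code.zero
  | .succ => Code.succ
  | .left => Code.left
  | .right => Code.right
  | .oracle => Code.curry oCode (Encodable.encode σ)
  | .pair a b => Code.pair (trOC σ a) (trOC σ b)
  | .comp a b => Code.comp (trOC σ a) (trOC σ b)
  | .prec a b => Code.prec (trOC σ a) (trOC σ b)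
  | .rfind' a => Code.rfind' (trOC σ a)

private theorem trOC_eval (σ : List Bool) :
    ∀ cc : OCode, (trOC σ cc).eval = cc.eval (oraF σ) := by
  intro cc
  induction cc with
  | zero => rfl
  | succ => rfl
  | left => rfl
  | right => rfl
  | oracle =>
    funext x
    show (Code.curry oCode (Encodable.encode σ)).eval x = oraF σ x
    rw [eval_curry, oCode_eval]
    simp [lookupPF, Nat.unpair_pair, Encodable.encodek]
  | pair a b iha ihb =>
    funext n
    show Nat.pair <$> (trOC σ a).eval n <*> (trOC σ b).eval n = _
    rw [iha, ihb]; rfl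
  | comp a b iha ihb =>
    funext n
    show (trOC σ b).eval n >>= (trOC σ a).eval = _
    rw [iha, ihb]; rfl
  | prec a b iha ihb =>
    show Code.eval (Code.prec (trOC σ a) (trOC σ b)) = _
    simp only [Code.eval, OCode.eval, iha, ihb]
    rfl
  | rfind' a iha =>
    show Code.eval (Code.rfind' (trOC σ a)) = _
    simp only [Code.eval, OCode.eval, iha]
    rfl

private theorem trOC_primrec (cc : OCode) : Primrec fun σ : List Bool => trOC σ cc := by
  induction cc with
  | zero => exact Primrec.const _
  | succ => exact Primrec.const _
  | left => exact Primrec.const _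
  | right => exact Primrec.const _
  | oracle => exact primrec₂_curry.comp (Primrec.const oCode) Primrec.encode
  | pair a b iha ihb => exact primrec₂_pair.comp iha ihb
  | comp a b iha ihb => exact primrec₂_comp.comp iha ihb
  | prec a b iha ihb => exact primrec₂_prec.comp iha ihb
  | rfind' a iha => exact primrec_rfind'.comp iha

/-! ### Binary strings coded by numbers -/

private def tb (x i : ℕ) : Bool := decide (x / 2 ^ i % 2 = 1)

private def bits (k x : ℕ) : List Bool := (List.range k).map (tb x)

private theorem bits_length (k x : ℕ) : (bits k x).length = k := by simp [bits]

private theorem tb_succ (x i : ℕ) : tb x (i + 1) = tb (x / 2) i := by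
  simp only [tb, pow_succ]
  rw [mul_comm, ← Nat.div_div_eq_div_mul]

private theorem bits_succ (k x : ℕ) : bits (k + 1) x = tb x 0 :: bits k (x / 2) := by
  rw [bits, List.range_succ_eq_map, List.map_cons, List.map_map]
  congr 1
  · rw [bits]
    congr 1
    funext i
    exact tb_succ x i

private theorem bits_take {j k : ℕ} (x : ℕ) (h : j ≤ k) : (bits k x).take j = bits j x := by
  simp [bits, ← List.map_take, List.take_range, Nat.min_eq_left h]

private def valB : List Bool → ℕ
  | [] => 0
  | b :: τ => cond b 1 0 + 2 * valB τ

private theorem valB_lt : ∀ τ : List Bool, valB τ < 2 ^ τ.length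
  | [] => by simp [valB]
  | b :: τ => by
    have := valB_lt τ
    cases b <;> simp [valB, List.length_cons, pow_succ] <;> omega

private theorem bits_valB : ∀ τ : List Bool, bits τ.length (valB τ) = τ
  | [] => by simp [bits]
  | b :: τ => by
    rw [List.length_cons, bits_succ]
    have h1 : tb (valB (b :: τ)) 0 = b := by
      cases b <;> simp [valB, tb] <;> omega
    have h2 : valB (b :: τ) / 2 = valB τ := by
      cases b <;> simp [valB] <;> omega
    rw [h1, h2, bits_valB τ]

private theorem bits_inj : ∀ k x y, x < 2 ^ k → y < 2 ^ k → bits k x = bits k y → x = y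
  | 0, x, y => by simpa using fun hx hy _ => by omega
  | k + 1, x, y => by
    intro hx hy h
    rw [bits_succ, bits_succ] at h
    have h0 : tb x 0 = tb y 0 := by injection h
    have ht : bits k (x / 2) = bits k (y / 2) := by injection h
    have hx' : x / 2 < 2 ^ k := by
      rw [pow_succ] at hx; omega
    have hy' : y / 2 < 2 ^ k := by
      rw [pow_succ] at hy; omega
    have := bits_inj k _ _ hx' hy' ht
    simp only [tb, pow_zero, Nat.div_one, decide_eq_decide] at h0
    omega

private theorem prefixOf_take (Z : ℕ → Bool) {j k : ℕ} (h : j ≤ k) :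
    (prefixOf Z k).take j = prefixOf Z j := by
  apply List.ext_getElem
  · simp [prefixOf, h]
  · intro i hi₁ hi₂
    simp only [prefixOf, List.getElem_take, List.getElem_ofFn]

private theorem prefixOf_length (Z : ℕ → Bool) (k : ℕ) : (prefixOf Z k).length = k := by
  simp [prefixOf]

private theorem mem_cylinder_prefixOf (Z : ℕ → Bool) (k : ℕ) : Z ∈ cylinder (prefixOf Z k) := by
  show prefixOf Z (prefixOf Z k).length = prefixOf Z k
  rw [prefixOf_length]

private theorem prefixOf_bits_valB (Z : ℕ → Bool) (k : ℕ) :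
    bits k (valB (prefixOf Z k)) = prefixOf Z k := by
  have := bits_valB (prefixOf Z k)
  rwa [prefixOf_length] at this

private theorem cylinder_mono {σ τ : List Bool} (h : σ <+: τ) : cylinder τ ⊆ cylinder σ := by
  intro Z hZ
  have hτ : prefixOf Z τ.length = τ := hZ
  show prefixOf Z σ.length = σ
  obtain ⟨ρ, hρ⟩ := h
  have hlen : σ.length ≤ τ.length := by
    rw [← hρ]; simp
  rw [← prefixOf_take Z hlen, hτ, ← hρ]
  exact List.take_left' rfl

end Aux2

section Aux3

open Nat.Partrec (Code)
open Nat.Partrec.Code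

private def cntB (f : ℕ → Bool) (n : ℕ) : ℕ :=
  ((List.range n).flatMap fun x => if f x then [x] else []).length

private theorem flatMap_filter (f : ℕ → Bool) :
    ∀ l : List ℕ, (l.flatMap fun x => if f x then [x] else []) = l.filter f := by
  intro l
  induction l with
  | nil => rfl
  | cons a l ih =>
    rw [List.flatMap_cons, List.filter_cons, ih]
    by_cases h : f a
    · simp [h]
    · simp [h]

private theorem cntB_pos_iff {f : ℕ → Bool} {n : ℕ} :
    0 < cntB f n ↔ ∃ x, x < n ∧ f x = true := by
  rw [cntB, flatMap_filter, List.length_pos_iff_exists_mem]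
  constructor
  · rintro ⟨a, ha⟩
    rw [List.mem_filter, List.mem_range] at ha
    exact ⟨a, ha.1, ha.2⟩
  · rintro ⟨x, hx, hfx⟩
    exact ⟨x, List.mem_filter.2 ⟨List.mem_range.2 hx, hfx⟩⟩

private theorem cntB_primrec {α : Type} [Primcodable α] {f : α → ℕ → Bool} {g : α → ℕ}
    (hf : Primrec₂ f) (hg : Primrec g) : Primrec fun a => cntB (f a) (g a) := by
  unfold cntB
  refine Primrec.list_length.comp ?_
  refine Primrec.list_flatMap (Primrec.list_range.comp hg) ?_
  have hc : PrimrecPred fun p : α × ℕ => f p.1 p.2 = true :=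
    Primrec.primrecPred ((hf.comp Primrec.fst Primrec.snd).of_eq fun p => by simp)
  exact Primrec.ite hc (Primrec.list_cons.comp Primrec.snd (Primrec.const []))
    (Primrec.const [])

private theorem pow2_primrec : Primrec (fun n : ℕ => 2 ^ n) :=
  (Primrec₂.unpaired'.1 Nat.Primrec.pow).comp (Primrec.const 2) Primrec.id

private theorem bits_primrec : Primrec₂ bits := by
  have htb : Primrec₂ tb := by
    have h1 : Primrec fun p : ℕ × ℕ => p.1 / 2 ^ p.2 % 2 :=
      Primrec.nat_mod.comp
        (Primrec.nat_div.comp Primrec.fst (pow2_primrec.comp Primrec.snd)) (Primrec.const 2)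
    exact (Primrec.eq.comp h1 (Primrec.const 1)).decide
  exact Primrec.list_map (Primrec.list_range.comp Primrec.fst)
    (htb.comp (Primrec.snd.comp Primrec.fst) Primrec.snd)

/-- The acceptance predicate: `x` codes a length-`k` string extending `σ₀` on which
the translated code halts within the bounds with output `u`. -/
private noncomputable def acceptB (c : OCode) (σ₀ : List Bool) (e u k x : ℕ) : Bool :=
  decide (bits σ₀.length x = σ₀ ∧
    0 < cntB (fun j => decide (σ₀.length ≤ j ∧
        0 < cntB (fun s =>
            decide (Nat.Partrec.Code.evaln s (trOC (bits j x) c) e = some u)) (k + 1)))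
      (k + 1))

private theorem acceptB_iff {c : OCode} {σ₀ : List Bool} {e u k x : ℕ} :
    acceptB c σ₀ e u k x = true ↔
      bits σ₀.length x = σ₀ ∧ ∃ j, j ≤ k ∧ σ₀.length ≤ j ∧
        ∃ s, s ≤ k ∧ Nat.Partrec.Code.evaln s (trOC (bits j x) c) e = some u := by
  simp only [acceptB, decide_eq_true_eq, cntB_pos_iff, Nat.lt_succ_iff]

private theorem acceptB_primrec (c : OCode) (σ₀ : List Bool) :
    Primrec₂ fun (p : ℕ × ℕ) (x : ℕ) =>
      acceptB c σ₀ p.1 p.2.unpair.2 p.2.unpair.1 x := by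
  have he : Primrec fun a : (ℕ × ℕ) × ℕ => a.1.1 := Primrec.fst.comp Primrec.fst
  have hu : Primrec fun a : (ℕ × ℕ) × ℕ => a.1.2.unpair.2 :=
    Primrec.snd.comp (Primrec.unpair.comp (Primrec.snd.comp Primrec.fst))
  have hk : Primrec fun a : (ℕ × ℕ) × ℕ => a.1.2.unpair.1 :=
    Primrec.fst.comp (Primrec.unpair.comp (Primrec.snd.comp Primrec.fst))
  have hx : Primrec fun a : (ℕ × ℕ) × ℕ => a.2 := Primrec.snd
  -- innermost: over `s`
  have hev : Primrec fun t : (((ℕ × ℕ) × ℕ) × ℕ) × ℕ =>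
      decide (Nat.Partrec.Code.evaln t.2 (trOC (bits t.1.2 t.1.1.2) c) t.1.1.1.1 =
        some t.1.1.1.2.unpair.2) := by
    have hcode : Primrec fun t : (((ℕ × ℕ) × ℕ) × ℕ) × ℕ => trOC (bits t.1.2 t.1.1.2) c :=
      (trOC_primrec c).comp (bits_primrec.comp (Primrec.snd.comp Primrec.fst)
        (hx.comp (Primrec.fst.comp Primrec.fst)))
    have hev0 : Primrec fun t : (((ℕ × ℕ) × ℕ) × ℕ) × ℕ =>
        Nat.Partrec.Code.evaln t.2 (trOC (bits t.1.2 t.1.1.2) c) t.1.1.1.1 :=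
      primrec_evaln.comp ((Primrec.snd.pair hcode).pair
        (he.comp (Primrec.fst.comp Primrec.fst)))
    exact (Primrec.eq.comp hev0
      (Primrec.option_some.comp (hu.comp (Primrec.fst.comp Primrec.fst)))).decide
  have hcnt1 : Primrec fun w : ((ℕ × ℕ) × ℕ) × ℕ =>
      cntB (fun s => decide (Nat.Partrec.Code.evaln s (trOC (bits w.2 w.1.2) c) w.1.1.1 =
        some w.1.1.2.unpair.2)) (w.1.1.2.unpair.1 + 1) :=
    cntB_primrec hev (Primrec.succ.comp (hk.comp Primrec.fst))
  have hjp : Primrec fun w : ((ℕ × ℕ) × ℕ) × ℕ =>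
      decide (σ₀.length ≤ w.2 ∧
        0 < cntB (fun s => decide (Nat.Partrec.Code.evaln s (trOC (bits w.2 w.1.2) c) w.1.1.1 =
          some w.1.1.2.unpair.2)) (w.1.1.2.unpair.1 + 1)) :=
    (PrimrecPred.and (Primrec.nat_le.comp (Primrec.const σ₀.length) Primrec.snd)
      (Primrec.nat_lt.comp (Primrec.const 0) hcnt1)).decide
  have hcnt2 : Primrec fun a : (ℕ × ℕ) × ℕ =>
      cntB (fun j => decide (σ₀.length ≤ j ∧
        0 < cntB (fun s => decide (Nat.Partrec.Code.evaln s (trOC (bits j a.2) c) a.1.1 =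
          some a.1.2.unpair.2)) (a.1.2.unpair.1 + 1))) (a.1.2.unpair.1 + 1) :=
    cntB_primrec hjp (Primrec.succ.comp hk)
  exact (PrimrecPred.and
    (Primrec.eq.comp (bits_primrec.comp (Primrec.const σ₀.length) hx) (Primrec.const σ₀))
    (Primrec.nat_lt.comp (Primrec.const 0) hcnt2)).decide

/-- The number of accepted strings of length `k`. -/
private noncomputable def NB (c : OCode) (σ₀ : List Bool) (e u k : ℕ) : ℕ :=
  cntB (acceptB c σ₀ e u k) (2 ^ k)

/-- The halting test for the majority-vote function. -/
private noncomputable def testB (c : OCode) (σ₀ : List Bool) (e m : ℕ) : Bool :=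
  decide (m.unpair.2 ≤ 1 ∧
    3 * 2 ^ m.unpair.1 < 8 * 2 ^ σ₀.length * NB c σ₀ e m.unpair.2 m.unpair.1)

private theorem testB_primrec (c : OCode) (σ₀ : List Bool) : Primrec₂ (testB c σ₀) := by
  have hu : Primrec fun p : ℕ × ℕ => p.2.unpair.2 :=
    Primrec.snd.comp (Primrec.unpair.comp Primrec.snd)
  have hk : Primrec fun p : ℕ × ℕ => p.2.unpair.1 :=
    Primrec.fst.comp (Primrec.unpair.comp Primrec.snd)
  have hNB : Primrec fun p : ℕ × ℕ => NB c σ₀ p.1 p.2.unpair.2 p.2.unpair.1 :=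
    cntB_primrec (acceptB_primrec c σ₀) (pow2_primrec.comp hk)
  exact (PrimrecPred.and (Primrec.nat_le.comp hu (Primrec.const 1))
    (Primrec.nat_lt.comp
      ((Primrec.nat_mul.comp (Primrec.const 3) (pow2_primrec.comp hk)))
      (Primrec.nat_mul.comp (Primrec.const (8 * 2 ^ σ₀.length)) hNB))).decide

/-- The majority-vote partial function. -/
private noncomputable def hFun (c : OCode) (σ₀ : List Bool) : ℕ →. ℕ := fun e =>
  (Nat.rfind fun m => Part.some (testB c σ₀ e m)).map fun m => m.unpair.2

private theorem hFun_partrec (c : OCode) (σ₀ : List Bool) : Nat.Partrec (hFun c σ₀) := by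
  rw [← Partrec.nat_iff]
  refine Partrec.map (Partrec.rfind ?_) ?_
  · exact (testB_primrec c σ₀).to_comp
  · exact ((Primrec.snd.comp (Primrec.unpair.comp Primrec.snd)).to_comp).to₂

/-- Embedding of ordinary codes into oracle codes. -/
private def embC : Code → OCode
  | Code.zero => OCode.zero
  | Code.succ => OCode.succ
  | Code.left => OCode.left
  | Code.right => OCode.right
  | Code.pair a b => OCode.pair (embC a) (embC b)
  | Code.comp a b => OCode.comp (embC a) (embC b)
  | Code.prec a b => OCode.prec (embC a) (embC b)
  | Code.rfind' a => OCode.rfind' (embC a)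

private theorem embC_eval (O : ℕ →. ℕ) : ∀ cd : Code, (embC cd).eval O = cd.eval := by
  intro cd
  induction cd with
  | zero => rfl
  | succ => rfl
  | left => rfl
  | right => rfl
  | pair a b iha ihb =>
    show OCode.eval O (OCode.pair (embC a) (embC b)) = _
    funext n
    simp only [OCode.eval, Code.eval, iha, ihb]
  | comp a b iha ihb =>
    show OCode.eval O (OCode.comp (embC a) (embC b)) = _
    funext n
    simp only [OCode.eval, Code.eval, iha, ihb]
  | prec a b iha ihb =>
    show OCode.eval O (OCode.prec (embC a) (embC b)) = _
    funext n
    simp only [OCode.eval, Code.eval, iha, ihb]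
  | rfind' a iha =>
    show OCode.eval O (OCode.rfind' (embC a)) = _
    funext n
    simp only [OCode.eval, Code.eval, iha]

end Aux3

section Aux4

open MeasureTheory

private theorem mem_cylinder_iff' {σ : List Bool} {Z : ℕ → Bool} :
    Z ∈ cylinder σ ↔ ∀ i : Fin σ.length, Z i = σ.get i := by
  show prefixOf Z σ.length = σ ↔ _
  constructor
  · intro h i
    have h2 : (prefixOf Z σ.length)[(i : ℕ)]? = σ[(i : ℕ)]? := by rw [h]
    rw [prefixOf_getElem?, if_pos i.isLt, List.getElem?_eq_getElem i.isLt] at h2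
    rw [List.get_eq_getElem]
    exact Option.some.inj h2
  · intro h
    apply List.ext_getElem (by simp [prefixOf])
    intro n h1 h2
    simpa [prefixOf] using h ⟨n, h2⟩

private theorem cylinder_measurable (σ : List Bool) : MeasurableSet (cylinder σ) := by
  have : cylinder σ = ⋂ i : Fin σ.length, {X : ℕ → Bool | X i = σ.get i} := by
    ext Z
    simpa [Set.mem_iInter] using mem_cylinder_iff'
  rw [this]
  refine MeasurableSet.iInter fun i => ?_
  have hm : MeasurableSet ((fun X : ℕ → Bool => X (i : ℕ)) ⁻¹' {σ.get i}) :=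
    measurable_pi_apply (i : ℕ) (measurableSet_singleton (σ.get i))
  exact hm

private theorem cylinder_nil : cylinder ([] : List Bool) = Set.univ := by
  ext Z
  simp [cylinder]

private theorem prefixOf_prefix (Z : ℕ → Bool) {j k : ℕ} (h : j ≤ k) :
    prefixOf Z j <+: prefixOf Z k := by
  rw [← prefixOf_take Z h]
  exact List.take_prefix _ _

private theorem cylinder_disjoint {σ τ : List Bool} (h1 : ¬ σ <+: τ) (h2 : ¬ τ <+: σ) :
    Disjoint (cylinder σ) (cylinder τ) := by
  rw [Set.disjoint_left]
  intro Z hσ hτ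
  have eσ : prefixOf Z σ.length = σ := hσ
  have eτ : prefixOf Z τ.length = τ := hτ
  rcases le_total σ.length τ.length with h | h
  · exact h1 (by rw [← eσ, ← eτ]; exact prefixOf_prefix Z h)
  · exact h2 (by rw [← eσ, ← eτ]; exact prefixOf_prefix Z h)

private theorem cylinder_disjoint_len {σ τ : List Bool} (hlen : σ.length = τ.length)
    (hne : σ ≠ τ) : Disjoint (cylinder σ) (cylinder τ) := by
  refine cylinder_disjoint (fun h => hne (h.eq_of_length hlen)) fun h => hne ?_
  exact (h.eq_of_length hlen.symm).symm

/-- Countable unions of basic cylinders. -/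
private def CylU (U : Set (ℕ → Bool)) : Prop :=
  ∃ T : Set (List Bool), U = ⋃ σ ∈ T, cylinder σ

private theorem CylU.measurableSet {U : Set (ℕ → Bool)} (h : CylU U) : MeasurableSet U := by
  obtain ⟨T, rfl⟩ := h
  exact MeasurableSet.biUnion (Set.to_countable T) fun σ _ => cylinder_measurable σ

private theorem CylU.iUnion {ι : Sort*} {U : ι → Set (ℕ → Bool)} (h : ∀ i, CylU (U i)) :
    CylU (⋃ i, U i) := by
  choose T hT using h
  refine ⟨⋃ i, T i, ?_⟩
  simp only [hT]
  rw [Set.biUnion_iUnion]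

private theorem CylU.univ : CylU (Set.univ : Set (ℕ → Bool)) :=
  ⟨{[]}, by simp [cylinder_nil]⟩

private theorem CylU.inter {U V : Set (ℕ → Bool)} (hU : CylU U) (hV : CylU V) :
    CylU (U ∩ V) := by
  obtain ⟨T₁, rfl⟩ := hU
  obtain ⟨T₂, rfl⟩ := hV
  refine ⟨{ρ | (∃ σ ∈ T₁, σ <+: ρ) ∧ (∃ τ ∈ T₂, τ <+: ρ)}, ?_⟩
  ext Z
  constructor
  · rintro ⟨hZ1, hZ2⟩
    simp only [Set.mem_iUnion] at hZ1 hZ2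
    obtain ⟨σ, hσT, hσ⟩ := hZ1
    obtain ⟨τ, hτT, hτ⟩ := hZ2
    have eσ : prefixOf Z σ.length = σ := hσ
    have eτ : prefixOf Z τ.length = τ := hτ
    have hp1 : σ <+: prefixOf Z (max σ.length τ.length) := by
      conv_lhs => rw [← eσ]
      exact prefixOf_prefix Z (le_max_left _ _)
    have hp2 : τ <+: prefixOf Z (max σ.length τ.length) := by
      conv_lhs => rw [← eτ]
      exact prefixOf_prefix Z (le_max_right _ _)
    exact Set.mem_biUnion (show _ ∈ {ρ | _} from ⟨⟨σ, hσT, hp1⟩, ⟨τ, hτT, hp2⟩⟩)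
      (mem_cylinder_prefixOf Z (max σ.length τ.length))
  · intro hZ
    simp only [Set.mem_iUnion] at hZ
    obtain ⟨ρ, ⟨⟨σ, hσT, hσρ⟩, ⟨τ, hτT, hτρ⟩⟩, hZ⟩ := hZ
    exact ⟨Set.mem_biUnion hσT (cylinder_mono hσρ hZ),
      Set.mem_biUnion hτT (cylinder_mono hτρ hZ)⟩

/-- Every countable union of cylinders is a disjoint (antichain) union of cylinders. -/
private theorem CylU.antichain {U : Set (ℕ → Bool)} (h : CylU U) :
    ∃ T : Set (List Bool), (∀ σ ∈ T, ∀ τ ∈ T, σ ≠ τ → ¬ σ <+: τ) ∧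
      U = ⋃ σ ∈ T, cylinder σ := by
  obtain ⟨T₀, rfl⟩ := h
  set P : List Bool → Prop := fun σ => ∃ τ ∈ T₀, τ <+: σ with hP
  refine ⟨{σ | P σ ∧ ∀ j, j < σ.length → ¬ P (σ.take j)}, ?_, ?_⟩
  · rintro σ ⟨hPσ, _⟩ τ ⟨_, hτmin⟩ hne hpre
    have hlen : σ.length ≤ τ.length := hpre.length_le
    rcases eq_or_lt_of_le hlen with heq | hlt
    · exact hne (hpre.eq_of_length heq)
    · refine hτmin σ.length hlt ?_
      obtain ⟨r, rfl⟩ := hpre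
      rw [List.take_left' rfl]
      exact hPσ
  · ext Z
    constructor
    · intro hZ
      simp only [Set.mem_iUnion] at hZ
      obtain ⟨τ, hτT, hτ⟩ := hZ
      have eτ : prefixOf Z τ.length = τ := hτ
      have hQ : ∃ j, P (prefixOf Z j) := ⟨τ.length, τ, hτT, by rw [eτ]⟩
      set j₀ := Nat.find hQ with hj₀
      refine Set.mem_biUnion (show prefixOf Z j₀ ∈ _ from ⟨Nat.find_spec hQ, ?_⟩)
        (mem_cylinder_prefixOf Z j₀)
      intro j hj
      rw [prefixOf_length] at hj
      rw [prefixOf_take Z hj.le]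
      exact Nat.find_min hQ hj
    · intro hZ
      simp only [Set.mem_iUnion] at hZ ⊢
      obtain ⟨σ, ⟨⟨τ, hτT, hτσ⟩, _⟩, hZ⟩ := hZ
      exact ⟨τ, hτT, cylinder_mono hτσ hZ⟩

private theorem measure_antichain (μ : MeasureTheory.Measure (ℕ → Bool))
    {T : Set (List Bool)} (hT : ∀ σ ∈ T, ∀ τ ∈ T, σ ≠ τ → ¬ σ <+: τ) :
    μ (⋃ σ ∈ T, cylinder σ) = ∑' σ : T, μ (cylinder (σ : List Bool)) := by
  haveI : Countable T := (Set.to_countable T).to_subtype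
  rw [Set.biUnion_eq_iUnion]
  refine measure_iUnion ?_ fun σ => cylinder_measurable _
  intro σ τ hne
  have hv : (σ : List Bool) ≠ τ := fun h => hne (Subtype.ext h)
  exact cylinder_disjoint (hT σ σ.2 τ τ.2 hv) (hT τ τ.2 σ σ.2 hv.symm)

/-- The density lemma: from positive measure extract a cylinder on which `S` has
relative measure more than `7/8`. -/
private theorem exists_density (μ : MeasureTheory.Measure (ℕ → Bool)) (hμ : IsFairCoin μ)
    {S : Set (ℕ → Bool)} (hS0 : μ S ≠ 0) (B : ℕ → Set (ℕ → Bool)) (hBcyl : ∀ n, CylU (B n))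
    (hBanti : Antitone B) (hBS : (⋂ n, B n) = S) :
    ∃ σ₀ : List Bool, 7 * μ (cylinder σ₀) < 8 * μ (S ∩ cylinder σ₀) := by
  have huniv : μ Set.univ = 1 := by
    rw [← cylinder_nil, hμ []]
    simp
  have hle1 : ∀ A : Set (ℕ → Bool), μ A ≤ 1 := fun A => by
    rw [← huniv]; exact measure_mono (Set.subset_univ A)
  have hfin : ∀ A : Set (ℕ → Bool), μ A ≠ ⊤ := fun A =>
    (lt_of_le_of_lt (hle1 A) ENNReal.one_lt_top).ne
  have ht : Filter.Tendsto (fun n => μ (B n)) Filter.atTop (nhds (μ S)) := by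
    have := MeasureTheory.tendsto_measure_iInter_atTop
      (fun n => ((hBcyl n).measurableSet).nullMeasurableSet) hBanti ⟨0, hfin _⟩
    rw [hBS] at this
    exact this
  have h78 : 7 * μ S < 8 * μ S := by
    rw [ENNReal.mul_lt_mul_iff_left hS0 (hfin S)]
    norm_num
  have hev : ∀ᶠ n in Filter.atTop, 7 * μ (B n) < 8 * μ S := by
    have hcont : Filter.Tendsto (fun n => 7 * μ (B n)) Filter.atTop (nhds (7 * μ S)) :=
      ENNReal.Tendsto.const_mul ht (Or.inr (by norm_num))
    exact hcont.eventually_lt_const h78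
  obtain ⟨n, hn⟩ := hev.exists
  obtain ⟨T, hTanti, hTU⟩ := (hBcyl n).antichain
  haveI : Countable T := (Set.to_countable T).to_subtype
  have hsub : S ⊆ B n := by
    rw [← hBS]; exact Set.iInter_subset B n
  by_contra hno
  push_neg at hno
  have hcontr : 8 * μ S < 8 * μ S := by
    calc 8 * μ S ≤ 8 * ∑' σ : T, μ (S ∩ cylinder (σ : List Bool)) := by
          refine mul_le_mul_right ?_ 8
          have : S ⊆ ⋃ σ : T, (S ∩ cylinder (σ : List Bool)) := by
            intro Z hZ
            have := hsub hZ
            rw [hTU] at this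
            simp only [Set.mem_iUnion] at this ⊢
            obtain ⟨σ, hσT, hσ⟩ := this
            exact ⟨⟨σ, hσT⟩, hZ, hσ⟩
          exact le_trans (measure_mono this) (measure_iUnion_le _)
      _ = ∑' σ : T, 8 * μ (S ∩ cylinder (σ : List Bool)) := ENNReal.tsum_mul_left.symm
      _ ≤ ∑' σ : T, 7 * μ (cylinder (σ : List Bool)) :=
          ENNReal.tsum_le_tsum fun σ => (hno (σ : List Bool)).trans_eq' rfl
      _ = 7 * ∑' σ : T, μ (cylinder (σ : List Bool)) := ENNReal.tsum_mul_left
      _ = 7 * μ (B n) := by rw [hTU, measure_antichain μ hTanti]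
      _ < 8 * μ S := hn
  exact absurd hcontr (lt_irrefl _)

end Aux4

section Aux5

open Nat.Partrec (Code)
open Nat.Partrec.Code
open MeasureTheory

private theorem cylU_prefix (k : ℕ) (Q : List Bool → Prop) : CylU {Z | Q (prefixOf Z k)} := by
  refine ⟨{σ | σ.length = k ∧ Q σ}, ?_⟩
  ext Z
  constructor
  · intro hZ
    exact Set.mem_biUnion ⟨prefixOf_length Z k, hZ⟩ (mem_cylinder_prefixOf Z k)
  · intro hZ
    simp only [Set.mem_iUnion] at hZ
    obtain ⟨σ, ⟨hlen, hQ⟩, hZc⟩ := hZ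
    have hpre : prefixOf Z σ.length = σ := hZc
    show Q (prefixOf Z k)
    rw [← hlen, hpre]
    exact hQ

private def setV (c : OCode) (e u k : ℕ) : Set (ℕ → Bool) :=
  {Z | ∃ j, j ≤ k ∧ ∃ s, s ≤ k ∧
    Nat.Partrec.Code.evaln s (trOC (prefixOf Z j) c) e = some u}

private theorem setV_cylU (c : OCode) (e u k : ℕ) : CylU (setV c e u k) := by
  have heq : setV c e u k = {Z | (fun τ : List Bool => ∃ j, j ≤ k ∧ ∃ s, s ≤ k ∧
      Nat.Partrec.Code.evaln s (trOC (τ.take j) c) e = some u) (prefixOf Z k)} := by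
    ext Z
    simp only [setV, Set.mem_setOf_eq]
    constructor
    · rintro ⟨j, hj, s, hs, hev⟩
      exact ⟨j, hj, s, hs, by rwa [prefixOf_take Z hj]⟩
    · rintro ⟨j, hj, s, hs, hev⟩
      exact ⟨j, hj, s, hs, by rwa [prefixOf_take Z hj] at hev⟩
  rw [heq]
  exact cylU_prefix k (fun τ : List Bool => ∃ j, j ≤ k ∧ ∃ s, s ≤ k ∧
    Nat.Partrec.Code.evaln s (trOC (τ.take j) c) e = some u)

private def OKb (e : ℕ) (b : Bool) : Prop :=
  ∀ v : ℕ, v ∈ jumpFn ∅ e → (cond b 1 0 : ℕ) ≠ v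

private def EVset (c : OCode) (e u : ℕ) : Set (ℕ → Bool) :=
  {Z | (u : ℕ) ∈ OCode.eval (chi (toSet Z)) c e}

private def Asets (c : OCode) (e : ℕ) : Set (ℕ → Bool) :=
  ⋃ (b : Bool) (_ : OKb e b), EVset c e (Encodable.encode b)

private def Sc (c : OCode) : Set (ℕ → Bool) := ⋂ e, Asets c e

private theorem EVset_eq (c : OCode) (e u : ℕ) : EVset c e u = ⋃ k, setV c e u k := by
  ext Z
  simp only [EVset, Set.mem_setOf_eq, Set.mem_iUnion]
  constructor
  · intro hu
    obtain ⟨k₀, hk₀⟩ := eval_use Z c e u hu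
    rw [← trOC_eval (prefixOf Z k₀) c] at hk₀
    obtain ⟨s, hs⟩ := evaln_complete.1 hk₀
    exact ⟨max k₀ s, k₀, le_max_left _ _, s, le_max_right _ _, Option.mem_def.1 hs⟩
  · rintro ⟨k, j, hj, s, hs, hev⟩
    have h1 : u ∈ (trOC (prefixOf Z j) c).eval e := evaln_sound (Option.mem_def.2 hev)
    rw [trOC_eval] at h1
    exact eval_mono (oraF_le_chi Z j) c e u h1

private theorem Asets_cylU (c : OCode) (e : ℕ) : CylU (Asets c e) := by
  refine CylU.iUnion fun b => CylU.iUnion fun _ => ?_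
  rw [EVset_eq]
  exact CylU.iUnion fun k => setV_cylU c e _ k

private def BnS (c : OCode) : ℕ → Set (ℕ → Bool)
  | 0 => Set.univ
  | n + 1 => BnS c n ∩ Asets c n

private theorem BnS_cylU (c : OCode) : ∀ n, CylU (BnS c n)
  | 0 => CylU.univ
  | n + 1 => (BnS_cylU c n).inter (Asets_cylU c n)

private theorem BnS_antitone (c : OCode) : Antitone (BnS c) :=
  antitone_nat_of_succ_le fun _ => Set.inter_subset_left

private theorem BnS_subset (c : OCode) : ∀ n e, e < n → BnS c n ⊆ Asets c e := by
  intro n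
  induction n with
  | zero => intro e he; exact absurd he (Nat.not_lt_zero e)
  | succ n ih =>
    intro e he
    rcases Nat.lt_succ_iff_lt_or_eq.1 he with h | rfl
    · exact Set.Subset.trans Set.inter_subset_left (ih e h)
    · exact Set.inter_subset_right

private theorem BnS_iInter (c : OCode) : (⋂ n, BnS c n) = Sc c := by
  ext Z
  simp only [Set.mem_iInter, Sc]
  constructor
  · intro h e
    exact BnS_subset c (e + 1) e (Nat.lt_succ_self e) (h (e + 1))
  · intro h n
    induction n with
    | zero => trivial
    | succ n ih => exact ⟨ih, h n⟩

private theorem Sc_measurable (c : OCode) : MeasurableSet (Sc c) :=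
  MeasurableSet.iInter fun e => (Asets_cylU c e).measurableSet

/-! ### The majority-vote sets -/

private def setW (c : OCode) (σ₀ : List Bool) (e u k : ℕ) : Set (ℕ → Bool) :=
  {Z | prefixOf Z σ₀.length = σ₀ ∧ ∃ j, j ≤ k ∧ σ₀.length ≤ j ∧ ∃ s, s ≤ k ∧
    Nat.Partrec.Code.evaln s (trOC (prefixOf Z j) c) e = some u}

private noncomputable def GoodF (c : OCode) (σ₀ : List Bool) (e u k : ℕ) : Finset ℕ :=
  (Finset.range (2 ^ k)).filter fun x => acceptB c σ₀ e u k x = true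

private theorem setW_subset_cyl (c : OCode) (σ₀ : List Bool) (e u k : ℕ) :
    setW c σ₀ e u k ⊆ cylinder σ₀ := fun _ hZ => hZ.1

private theorem setW_mono (c : OCode) (σ₀ : List Bool) (e u : ℕ) :
    Monotone (setW c σ₀ e u) := by
  intro k k' hk Z hZ
  obtain ⟨h0, j, hj, hLj, s, hs, hev⟩ := hZ
  exact ⟨h0, j, hj.trans hk, hLj, s, hs.trans hk, hev⟩

private theorem setW_sound {c : OCode} {σ₀ : List Bool} {e u k : ℕ} {Z : ℕ → Bool}
    (hZ : Z ∈ setW c σ₀ e u k) : (u : ℕ) ∈ OCode.eval (chi (toSet Z)) c e := by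
  obtain ⟨_, j, _, _, s, _, hev⟩ := hZ
  have h1 : u ∈ (trOC (prefixOf Z j) c).eval e := evaln_sound (Option.mem_def.2 hev)
  rw [trOC_eval] at h1
  exact eval_mono (oraF_le_chi Z j) c e u h1

private theorem setW_complete {c : OCode} {σ₀ : List Bool} {e u : ℕ} {Z : ℕ → Bool}
    (hcyl : Z ∈ cylinder σ₀) (hu : (u : ℕ) ∈ OCode.eval (chi (toSet Z)) c e) :
    ∃ k, Z ∈ setW c σ₀ e u k := by
  obtain ⟨k₀, hk₀⟩ := eval_use Z c e u hu
  set j := max k₀ σ₀.length with hj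
  have h1 : u ∈ OCode.eval (oraF (prefixOf Z j)) c e :=
    eval_mono (oraF_mono Z (le_max_left _ _)) c e u hk₀
  rw [← trOC_eval (prefixOf Z j) c] at h1
  obtain ⟨s, hs⟩ := evaln_complete.1 h1
  exact ⟨max j s, hcyl, j, le_max_left _ _, le_max_right _ _, s, le_max_right _ _,
    Option.mem_def.1 hs⟩

private theorem setW_eq_biUnion (c : OCode) (σ₀ : List Bool) (e u k : ℕ) :
    setW c σ₀ e u k = ⋃ x ∈ GoodF c σ₀ e u k, cylinder (bits k x) := by
  ext Z
  constructor
  · rintro ⟨h0, j, hj, hLj, s, hs, hev⟩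
    have hLk : σ₀.length ≤ k := hLj.trans hj
    set x := valB (prefixOf Z k) with hx
    have hbk : bits k x = prefixOf Z k := prefixOf_bits_valB Z k
    have hxlt : x < 2 ^ k := by
      have := valB_lt (prefixOf Z k)
      rwa [prefixOf_length] at this
    have hbj : ∀ j', j' ≤ k → bits j' x = prefixOf Z j' := by
      intro j' hj'
      rw [← bits_take x hj', hbk, prefixOf_take Z hj']
    have hacc : acceptB c σ₀ e u k x = true := by
      rw [acceptB_iff]
      exact ⟨by rw [hbj _ hLk, h0], j, hj, hLj, s, hs, by rwa [hbj j hj]⟩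
    refine Set.mem_biUnion (Finset.mem_filter.2 ⟨Finset.mem_range.2 hxlt, hacc⟩) ?_
    rw [hbk]
    exact mem_cylinder_prefixOf Z k
  · intro hZ
    simp only [Set.mem_iUnion] at hZ
    obtain ⟨x, hxG, hZc⟩ := hZ
    obtain ⟨hxr, hacc⟩ := Finset.mem_filter.1 hxG
    rw [acceptB_iff] at hacc
    obtain ⟨hL, j, hj, hLj, s, hs, hev⟩ := hacc
    have hpk : prefixOf Z k = bits k x := by
      have := (mem_cylinder_iff (σ := bits k x)).1 hZc
      rwa [bits_length] at this
    have hpj : ∀ j', j' ≤ k → prefixOf Z j' = bits j' x := by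
      intro j' hj'
      rw [← prefixOf_take Z hj', hpk, bits_take x hj']
    refine ⟨?_, j, hj, hLj, s, hs, ?_⟩
    · rw [hpj _ (hLj.trans hj), hL]
    · rwa [hpj j hj]

private theorem setW_measurable (c : OCode) (σ₀ : List Bool) (e u k : ℕ) :
    MeasurableSet (setW c σ₀ e u k) := by
  rw [setW_eq_biUnion]
  exact (GoodF c σ₀ e u k).measurableSet_biUnion fun x _ => cylinder_measurable _

private theorem cntB_succ (f : ℕ → Bool) (n : ℕ) :
    cntB f (n + 1) = cntB f n + (if f n then 1 else 0) := by
  rw [cntB, cntB, List.range_succ, List.flatMap_append, List.length_append]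
  congr 1
  by_cases h : f n <;> simp [h]

private theorem card_filter_eq_cntB (f : ℕ → Bool) :
    ∀ n, ((Finset.range n).filter fun x => f x = true).card = cntB f n := by
  intro n
  induction n with
  | zero => rfl
  | succ n ih =>
    rw [Finset.range_add_one, Finset.filter_insert, cntB_succ]
    by_cases h : f n
    · rw [if_pos h, if_pos h, Finset.card_insert_of_notMem, ih]
      intro hmem
      exact absurd (Finset.mem_range.1 (Finset.mem_of_mem_filter n hmem)) (lt_irrefl n)
    · rw [if_neg h, if_neg h, ih, Nat.add_zero]

private theorem GoodF_card (c : OCode) (σ₀ : List Bool) (e u k : ℕ) :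
    (GoodF c σ₀ e u k).card = NB c σ₀ e u k := by
  rw [GoodF, NB, card_filter_eq_cntB]

private theorem setW_measure (μ : MeasureTheory.Measure (ℕ → Bool)) (hμ : IsFairCoin μ)
    (c : OCode) (σ₀ : List Bool) (e u k : ℕ) :
    μ (setW c σ₀ e u k) = (NB c σ₀ e u k : ENNReal) * (1 / 2) ^ k := by
  rw [setW_eq_biUnion]
  rw [measure_biUnion_finset ?_ fun x _ => cylinder_measurable _]
  · have : ∀ x ∈ GoodF c σ₀ e u k, μ (cylinder (bits k x)) = (1 / 2 : ENNReal) ^ k := by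
      intro x _
      rw [hμ (bits k x), bits_length]
    rw [Finset.sum_congr rfl this, Finset.sum_const, nsmul_eq_mul, GoodF_card]
  · intro x hx y hy hne
    have hxlt : x < 2 ^ k := Finset.mem_range.1 (Finset.mem_of_mem_filter x hx)
    have hylt : y < 2 ^ k := Finset.mem_range.1 (Finset.mem_of_mem_filter y hy)
    refine cylinder_disjoint_len (by rw [bits_length, bits_length]) ?_
    intro hbits
    exact hne (bits_inj k x y hxlt hylt hbits)

/-- The numeric bridge between `ENNReal` masses and natural-number counts. -/
private theorem mass_lt_iff {a b i j : ℕ} :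
    (a : ENNReal) * (1 / 2) ^ i < (b : ENNReal) * (1 / 2) ^ j ↔ a * 2 ^ j < b * 2 ^ i := by
  have h2 : (1 / 2 : ENNReal) = 2⁻¹ := one_div 2
  have hc0 : ((2 : ENNReal) ^ (i + j)) ≠ 0 := by positivity
  have hct : ((2 : ENNReal) ^ (i + j)) ≠ ⊤ := ENNReal.pow_ne_top (by norm_num)
  have hkey : ∀ (x p q : ℕ), ((x : ENNReal) * (1 / 2) ^ p) * 2 ^ (p + q) =
      (x : ENNReal) * 2 ^ q := by
    intro x p q
    rw [h2, pow_add, ← mul_assoc, mul_assoc (x : ENNReal), ← mul_pow,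
      ENNReal.inv_mul_cancel (by norm_num) (by norm_num), one_pow, mul_one]
  have step1 : ((a : ENNReal) * (1 / 2) ^ i < (b : ENNReal) * (1 / 2) ^ j) ↔
      ((a : ENNReal) * (1 / 2) ^ i * 2 ^ (i + j) < (b : ENNReal) * (1 / 2) ^ j * 2 ^ (i + j)) :=
    (ENNReal.mul_lt_mul_iff_left hc0 hct).symm
  rw [step1, hkey a i j, show i + j = j + i from Nat.add_comm i j, hkey b j i]
  rw [show ((a : ENNReal) * 2 ^ j) = ((a * 2 ^ j : ℕ) : ENNReal) by push_cast; ring,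
    show ((b : ENNReal) * 2 ^ i) = ((b * 2 ^ i : ℕ) : ENNReal) by push_cast; ring,
    Nat.cast_lt]

/-- The key lemma: each `Sc c` is null. -/
private theorem Sc_null (μ : MeasureTheory.Measure (ℕ → Bool)) (hμ : IsFairCoin μ)
    (c : OCode) : μ (Sc c) = 0 := by
  by_contra h0
  obtain ⟨σ₀, h78⟩ := exists_density μ hμ h0 (BnS c) (BnS_cylU c) (BnS_antitone c) (BnS_iInter c)
  have hμcyl : μ (cylinder σ₀) = (1 / 2 : ENNReal) ^ σ₀.length := hμ σ₀
  have hmemSc : ∀ Z, Z ∈ Sc c → ∀ e, ∃ b : Bool, OKb e b ∧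
      (Encodable.encode b : ℕ) ∈ OCode.eval (chi (toSet Z)) c e := by
    intro Z hZ e
    have := Set.mem_iInter.1 hZ e
    simp only [Asets, Set.mem_iUnion] at this
    obtain ⟨b, hb, hmem⟩ := this
    exact ⟨b, hb, hmem⟩
  -- Halting of the majority vote search.
  have htot : ∀ e, ∃ u k, u ≤ 1 ∧ 3 * 2 ^ k < 8 * 2 ^ σ₀.length * NB c σ₀ e u k := by
    intro e
    have hcover : Sc c ∩ cylinder σ₀ ⊆ ⋃ k, (setW c σ₀ e 0 k ∪ setW c σ₀ e 1 k) := by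
      rintro Z ⟨hZS, hZc⟩
      obtain ⟨b, _, hmem⟩ := hmemSc Z hZS e
      obtain ⟨k, hk⟩ := setW_complete hZc hmem
      refine Set.mem_iUnion.2 ⟨k, ?_⟩
      cases b
      · exact Or.inl hk
      · exact Or.inr hk
    have hUmono : Monotone fun k => setW c σ₀ e 0 k ∪ setW c σ₀ e 1 k := fun k k' h =>
      Set.union_subset_union (setW_mono c σ₀ e 0 h) (setW_mono c σ₀ e 1 h)
    have hsup : μ (⋃ k, (setW c σ₀ e 0 k ∪ setW c σ₀ e 1 k)) =
        ⨆ k, μ (setW c σ₀ e 0 k ∪ setW c σ₀ e 1 k) :=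
      Directed.measure_iUnion hUmono.directed_le
    have hlt : ∃ k, 7 * μ (cylinder σ₀) < 8 * μ (setW c σ₀ e 0 k ∪ setW c σ₀ e 1 k) := by
      by_contra hno
      push_neg at hno
      have hle : 8 * μ (Sc c ∩ cylinder σ₀) ≤ 7 * μ (cylinder σ₀) := by
        calc 8 * μ (Sc c ∩ cylinder σ₀)
            ≤ 8 * μ (⋃ k, (setW c σ₀ e 0 k ∪ setW c σ₀ e 1 k)) :=
              mul_le_mul_right (measure_mono hcover) 8
          _ = 8 * ⨆ k, μ (setW c σ₀ e 0 k ∪ setW c σ₀ e 1 k) := by rw [hsup]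
          _ = ⨆ k, 8 * μ (setW c σ₀ e 0 k ∪ setW c σ₀ e 1 k) := by rw [ENNReal.mul_iSup]
          _ ≤ 7 * μ (cylinder σ₀) := iSup_le hno
      exact absurd (h78.trans_le hle) (lt_irrefl _)
    obtain ⟨k, hk⟩ := hlt
    have hdis : Disjoint (setW c σ₀ e 0 k) (setW c σ₀ e 1 k) := by
      rw [Set.disjoint_left]
      intro Z h0' h1'
      have h01 : (0 : ℕ) = 1 := Part.mem_unique (setW_sound h0') (setW_sound h1')
      exact absurd h01 (by norm_num)
    have hsum : μ (setW c σ₀ e 0 k ∪ setW c σ₀ e 1 k) =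
        μ (setW c σ₀ e 0 k) + μ (setW c σ₀ e 1 k) :=
      measure_union hdis (setW_measurable c σ₀ e 1 k)
    have hbig : 7 * μ (cylinder σ₀) < 16 * μ (setW c σ₀ e 0 k) ∨
        7 * μ (cylinder σ₀) < 16 * μ (setW c σ₀ e 1 k) := by
      by_contra hq
      push_neg at hq
      obtain ⟨hq0, hq1⟩ := hq
      have h16 : 2 * (8 * μ (setW c σ₀ e 0 k ∪ setW c σ₀ e 1 k)) ≤
          2 * (7 * μ (cylinder σ₀)) := by
        calc 2 * (8 * μ (setW c σ₀ e 0 k ∪ setW c σ₀ e 1 k))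
            = 16 * μ (setW c σ₀ e 0 k) + 16 * μ (setW c σ₀ e 1 k) := by
              rw [hsum]; ring
          _ ≤ 7 * μ (cylinder σ₀) + 7 * μ (cylinder σ₀) := add_le_add hq0 hq1
          _ = 2 * (7 * μ (cylinder σ₀)) := by ring
      have := (ENNReal.mul_le_mul_iff_right (by norm_num) (by norm_num)).1 h16
      exact absurd (hk.trans_le this) (lt_irrefl _)
    have main : ∀ u, 7 * μ (cylinder σ₀) < 16 * μ (setW c σ₀ e u k) →
        3 * 2 ^ k < 8 * 2 ^ σ₀.length * NB c σ₀ e u k := by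
      intro u h
      rw [hμcyl, setW_measure μ hμ c σ₀ e u k, ← mul_assoc] at h
      have hm : ((7 : ℕ) : ENNReal) * (1 / 2) ^ σ₀.length <
          ((16 * NB c σ₀ e u k : ℕ) : ENNReal) * (1 / 2) ^ k := by
        exact_mod_cast h
      have hcount := mass_lt_iff.1 hm
      -- hcount : 7 * 2 ^ k < 16 * NB * 2 ^ σ₀.length
      have hp : 0 < 2 ^ k := Nat.pow_pos (by norm_num)
      have h1 : 2 * (3 * 2 ^ k) < 2 * (8 * 2 ^ σ₀.length * NB c σ₀ e u k) := by
        calc 2 * (3 * 2 ^ k) = 6 * 2 ^ k := by ring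
          _ < 7 * 2 ^ k := (mul_lt_mul_iff_left₀ hp).2 (by norm_num)
          _ < 16 * NB c σ₀ e u k * 2 ^ σ₀.length := hcount
          _ = 2 * (8 * 2 ^ σ₀.length * NB c σ₀ e u k) := by ring
      exact lt_of_mul_lt_mul_left h1 (Nat.zero_le 2)
    rcases hbig with h | h
    · exact ⟨0, k, by norm_num, main 0 h⟩
    · exact ⟨1, k, by norm_num, main 1 h⟩
  -- Safety of the majority vote.
  have hsafe : ∀ e u k, 3 * 2 ^ k < 8 * 2 ^ σ₀.length * NB c σ₀ e u k →
      ∀ v, v ∈ jumpFn ∅ e → u ≠ v := by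
    intro e u k hcnt v hv heq
    subst heq
    have hdisj : Disjoint (setW c σ₀ e u k) (Sc c ∩ cylinder σ₀) := by
      rw [Set.disjoint_left]
      rintro Z hW ⟨hS, _⟩
      obtain ⟨b, hOK, hmem⟩ := hmemSc Z hS e
      have hub : (u : ℕ) = Encodable.encode b := Part.mem_unique (setW_sound hW) hmem
      have hcb : (Encodable.encode b : ℕ) = cond b 1 0 := by cases b <;> rfl
      exact hOK u hv (by rw [← hcb, ← hub])
    have hun : μ (setW c σ₀ e u k) + μ (Sc c ∩ cylinder σ₀) ≤ μ (cylinder σ₀) := by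
      rw [← measure_union hdisj ((Sc_measurable c).inter (cylinder_measurable σ₀))]
      exact measure_mono (Set.union_subset (setW_subset_cyl c σ₀ e u k)
        Set.inter_subset_right)
    have hcnt' : 3 * 2 ^ k < 8 * NB c σ₀ e u k * 2 ^ σ₀.length := by
      have hre : 8 * 2 ^ σ₀.length * NB c σ₀ e u k = 8 * NB c σ₀ e u k * 2 ^ σ₀.length := by
        ring
      rwa [hre] at hcnt
    have hW : ((3 : ℕ) : ENNReal) * (1 / 2) ^ σ₀.length <
        ((8 * NB c σ₀ e u k : ℕ) : ENNReal) * (1 / 2) ^ k := mass_lt_iff.2 hcnt'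
    have hW' : 3 * (1 / 2 : ENNReal) ^ σ₀.length < 8 * μ (setW c σ₀ e u k) := by
      rw [setW_measure μ hμ c σ₀ e u k, ← mul_assoc]
      exact_mod_cast hW
    have hS' : 7 * (1 / 2 : ENNReal) ^ σ₀.length < 8 * μ (Sc c ∩ cylinder σ₀) := by
      rw [← hμcyl]
      exact h78
    have hbig : (10 : ENNReal) * (1 / 2) ^ σ₀.length < 8 * μ (cylinder σ₀) := by
      calc (10 : ENNReal) * (1 / 2) ^ σ₀.length
          = 3 * (1 / 2 : ENNReal) ^ σ₀.length + 7 * (1 / 2 : ENNReal) ^ σ₀.length := by ring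
        _ < 8 * μ (setW c σ₀ e u k) + 8 * μ (Sc c ∩ cylinder σ₀) :=
            ENNReal.add_lt_add hW' hS'
        _ = 8 * (μ (setW c σ₀ e u k) + μ (Sc c ∩ cylinder σ₀)) := (mul_add 8 _ _).symm
        _ ≤ 8 * μ (cylinder σ₀) := mul_le_mul_right hun 8
    rw [hμcyl] at hbig
    have h108 : (10 : ENNReal) < 8 :=
      (ENNReal.mul_lt_mul_iff_left (pow_ne_zero σ₀.length (by norm_num))
        (ENNReal.pow_ne_top (by norm_num))).1 hbig
    norm_num at h108
  -- The diagonal contradiction.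
  obtain ⟨cd, hcd⟩ := exists_code.1 (hFun_partrec c σ₀)
  have hdev : OCode.eval (chi ∅) (embC cd) = hFun c σ₀ := by rw [embC_eval, hcd]
  have hjump : jumpFn ∅ (encO (embC cd)) = hFun c σ₀ (encO (embC cd)) := by
    show phi ∅ (encO (embC cd)) (encO (embC cd)) = _
    rw [phi, ofNat_encO, hdev]
  obtain ⟨u0, k0, hu1, hcnt⟩ := htot (encO (embC cd))
  have htB : testB c σ₀ (encO (embC cd)) (Nat.pair k0 u0) = true := by
    simp only [testB, Nat.unpair_pair, decide_eq_true_eq]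
    exact ⟨hu1, hcnt⟩
  have hdom : (Nat.rfind fun m => Part.some (testB c σ₀ (encO (embC cd)) m)).Dom := by
    refine Nat.rfind_dom.2 ?_
    exact ⟨Nat.pair k0 u0, Part.mem_some_iff.2 htB.symm, fun {m} _ => trivial⟩
  set m0 := (Nat.rfind fun m => Part.some (testB c σ₀ (encO (embC cd)) m)).get hdom with hm0def
  have hm0mem : m0 ∈ Nat.rfind fun m => Part.some (testB c σ₀ (encO (embC cd)) m) :=
    Part.get_mem hdom
  have htests : testB c σ₀ (encO (embC cd)) m0 = true :=
    (Part.mem_some_iff.1 (Nat.rfind_spec hm0mem)).symm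
  rw [testB, decide_eq_true_eq] at htests
  obtain ⟨hu0le, hcnt0⟩ := htests
  have humem : m0.unpair.2 ∈ hFun c σ₀ (encO (embC cd)) := by
    show m0.unpair.2 ∈ (Nat.rfind fun m =>
      Part.some (testB c σ₀ (encO (embC cd)) m)).map fun m => m.unpair.2
    exact (Part.mem_map_iff _).2 ⟨m0, hm0mem, rfl⟩
  have hvmem : m0.unpair.2 ∈ jumpFn ∅ (encO (embC cd)) := by
    rw [hjump]
    exact humem
  exact hsafe (encO (embC cd)) m0.unpair.2 m0.unpair.1 hcnt0 m0.unpair.2 hvmem rfl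

end Aux5

/-- The class of sets of PA degree (those computing a {0,1}-valued diagonally
noncomputable function) is null. -/
theorem PA_degree_null
    (μ : MeasureTheory.Measure (ℕ → Bool)) (hμ : IsFairCoin μ) :
    μ { Z : ℕ → Bool | ∃ f : ℕ → Bool, ComputableIn (toSet Z) f ∧ DNCBoolRel ∅ f } = 0 := by
  have hsub : { Z : ℕ → Bool | ∃ f : ℕ → Bool, ComputableIn (toSet Z) f ∧ DNCBoolRel ∅ f } ⊆
      ⋃ c : OCode, Sc c := by
    rintro Z ⟨f, ⟨c, hc⟩, hdnc⟩
    refine Set.mem_iUnion.2 ⟨c, Set.mem_iInter.2 fun e => ?_⟩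
    refine Set.mem_iUnion.2 ⟨f e, Set.mem_iUnion.2 ⟨fun v hv => hdnc e v hv, ?_⟩⟩
    show (Encodable.encode (f e) : ℕ) ∈ OCode.eval (chi (toSet Z)) c e
    have he := hc e
    rw [show (Encodable.encode e : ℕ) = e from rfl] at he
    rw [he]
    exact Part.mem_some_iff.2 rfl
  have hinj : Function.Injective encO := fun a b h => by
    rw [← ofNat_encO a, h, ofNat_encO]
  haveI : Countable OCode := hinj.countable
  refine MeasureTheory.measure_mono_null hsub ?_
  exact MeasureTheory.measure_iUnion_null fun c => Sc_null μ hμ c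

end Superhigh
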